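/- Let n ≥ 3, m ≥ 3, G¹ ∈ {Pₙ, Cₙ}, G² ∈ {Pₘ, Cₘ}, and let S be a global defensive alliance of G¹ ∘ G². Denote by sᵢ the number of vertices of S in the i-th copy of G². If 2 ≤ i ≤ n−1 and sᵢ ≥ 1, then s_{i−1} + s_{i+1} ≥ m − 1. -/

import Mathlib

/-- Lexicographic product of simple graphs. -/
def lexProd {α β : Type*} (G : SimpleGraph α) (H : SimpleGraph β) :
    SimpleGraph (α × β) where
  Adj x y := G.Adj x.1 y.1 ∨ (x.1 = y.1 ∧ H.Adj x.2 y.2)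
  symm := by
    constructor
    rintro x y (h | ⟨h1, h2⟩)
    · exact Or.inl h.symm
    · exact Or.inr ⟨h1.symm, h2.symm⟩
  loopless := by
    constructor
    rintro x (h | ⟨_, h2⟩)
    · exact G.irrefl h
    · exact H.irrefl h2

/-- Closed neighborhood N[v]. -/
def closedNbhd {α : Type*} (G : SimpleGraph α) (v : α) : Set α :=
  insert v (G.neighborSet v)

/-- A defensive alliance: every vertex of S is defended. -/
def IsDefensiveAlliance {α : Type*} (G : SimpleGraph α) (S : Set α) : Prop :=
  ∀ v ∈ S, ((closedNbhd G v) \ S).ncard ≤ ((closedNbhd G v) ∩ S).ncard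

/-- A global defensive alliance: a defensive alliance which is also dominating. -/
def IsGDA {α : Type*} (G : SimpleGraph α) (S : Set α) : Prop :=
  IsDefensiveAlliance G S ∧ ∀ v, v ∈ S ∨ ∃ u ∈ S, G.Adj v u

/-- The global defensive alliance number. -/
noncomputable def gdaNumber {α : Type*} (G : SimpleGraph α) : ℕ :=
  sInf {k | ∃ S : Set α, IsGDA G S ∧ S.ncard = k}

/-- Number of vertices of S in the j-th copy of G² (copies indexed 1,…,n). -/
noncomputable def copyCount {n m : ℕ} (S : Set (Fin n × Fin m)) (j : ℕ) : ℕ :=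
  (S ∩ {p | (p.1 : ℕ) + 1 = j}).ncard

lemma fin_sub_one_val {k : ℕ} (a : Fin (k + 3)) (h : 1 ≤ a.val) :
    (a - 1).val = a.val - 1 := by
  rw [Fin.coe_sub_one, if_neg]
  intro h0; rw [h0] at h; simp at h

lemma fin_add_one_val {k : ℕ} (a : Fin (k + 3)) (h : a.val + 1 < k + 3) :
    (a + 1).val = a.val + 1 :=
  Fin.val_add_one_of_lt (by rw [Fin.lt_iff_val_lt_val]; simp [Fin.last]; omega)

lemma nbr_mem {k : ℕ} (G : SimpleGraph (Fin (k + 3)))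
    (hG : G = SimpleGraph.pathGraph (k + 3) ∨ G = SimpleGraph.cycleGraph (k + 3))
    (b w : Fin (k + 3)) (h : G.Adj b w) : w = b - 1 ∨ w = b + 1 := by
  rcases hG with rfl | rfl
  · rw [SimpleGraph.pathGraph_adj] at h
    rcases h with h | h
    · right; apply Fin.ext; rw [fin_add_one_val b (by omega)]; omega
    · left; apply Fin.ext; rw [fin_sub_one_val b (by omega)]; omega
  · rw [SimpleGraph.cycleGraph_adj (n := k + 1)] at h
    rcases h with h | h
    · left; rw [← sub_sub_cancel b w, h]
    · right; rw [sub_eq_iff_eq_add'] at h; exact h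

lemma adj_interior {k : ℕ} (G : SimpleGraph (Fin (k + 3)))
    (hG : G = SimpleGraph.pathGraph (k + 3) ∨ G = SimpleGraph.cycleGraph (k + 3))
    (a : Fin (k + 3)) (h1 : 1 ≤ a.val) (h2 : a.val ≤ k + 1) :
    G.Adj a (a - 1) ∧ G.Adj a (a + 1) := by
  rcases hG with rfl | rfl
  · constructor
    · rw [SimpleGraph.pathGraph_adj]; right; rw [fin_sub_one_val a (by omega)]; omega
    · rw [SimpleGraph.pathGraph_adj]; left; rw [fin_add_one_val a (by omega)]
  · constructor
    · rw [SimpleGraph.cycleGraph_adj (n := k + 1)]; left; rw [sub_sub_cancel]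
    · rw [SimpleGraph.cycleGraph_adj (n := k + 1)]; right; rw [add_sub_cancel_left]

theorem stmt_14 (n m : ℕ) (hn : 3 ≤ n) (hm : 3 ≤ m)
    (G1 : SimpleGraph (Fin n))
    (hG1 : G1 = SimpleGraph.pathGraph n ∨ G1 = SimpleGraph.cycleGraph n)
    (G2 : SimpleGraph (Fin m))
    (hG2 : G2 = SimpleGraph.pathGraph m ∨ G2 = SimpleGraph.cycleGraph m)
    (S : Set (Fin n × Fin m)) (hS : IsGDA (lexProd G1 G2) S) :
    ∀ i : ℕ, 2 ≤ i → i ≤ n - 1 → 1 ≤ copyCount S i →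
      m - 1 ≤ copyCount S (i - 1) + copyCount S (i + 1) := by
  obtain ⟨n', rfl⟩ : ∃ n', n = n' + 3 := ⟨n - 3, by omega⟩
  obtain ⟨m', rfl⟩ : ∃ m', m = m' + 3 := ⟨m - 3, by omega⟩
  intro i hi2 hin hcc
  have hne : (S ∩ {p : Fin (n' + 3) × Fin (m' + 3) | (p.1 : ℕ) + 1 = i}).Nonempty := by
    rw [Set.nonempty_iff_ne_empty]
    intro h
    rw [copyCount, h, Set.ncard_empty] at hcc
    omega
  obtain ⟨v, hvS, hvi⟩ := hne
  set a := v.1 with ha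
  set b := v.2 with hb
  have hvi' : (a : ℕ) + 1 = i := hvi
  have ha1 : 1 ≤ (a : ℕ) := by omega
  have ha2 : (a : ℕ) ≤ n' + 1 := by omega
  obtain ⟨hadjm, hadjp⟩ := adj_interior G1 hG1 a ha1 ha2
  have hG1nbr := nbr_mem G1 hG1 a
  have hG2nbr := nbr_mem G2 hG2 b
  have ham : ((a - 1 : Fin (n' + 3)) : ℕ) = (a : ℕ) - 1 := fin_sub_one_val a ha1
  have hap : ((a + 1 : Fin (n' + 3)) : ℕ) = (a : ℕ) + 1 := fin_add_one_val a (by omega)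
  set Cm : Set (Fin (n' + 3) × Fin (m' + 3)) := {p | p.1 = a - 1} with hCmdef
  set Cp : Set (Fin (n' + 3) × Fin (m' + 3)) := {p | p.1 = a + 1} with hCpdef
  set D : Set (Fin (n' + 3) × Fin (m' + 3)) := {p | p.1 = a ∧ p.2 ∈ closedNbhd G2 b}
    with hDdef
  set A := closedNbhd (lexProd G1 G2) v with hAdef
  -- copies are inside the closed neighborhood
  have hCmA : Cm ⊆ A := by
    intro p hp
    refine Set.mem_insert_of_mem _ ?_
    show (lexProd G1 G2).Adj v p
    left
    rw [show p.1 = a - 1 from hp]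
    exact hadjm
  have hCpA : Cp ⊆ A := by
    intro p hp
    refine Set.mem_insert_of_mem _ ?_
    show (lexProd G1 G2).Adj v p
    left
    rw [show p.1 = a + 1 from hp]
    exact hadjp
  -- the closed neighborhood is covered by the two copies and D
  have hAS : A ∩ S ⊆ (Cm ∩ S) ∪ (Cp ∩ S) ∪ D := by
    rintro p ⟨hpA, hpS⟩
    rw [hAdef, closedNbhd, Set.mem_insert_iff] at hpA
    rcases hpA with rfl | hadj
    · right; exact ⟨rfl, Set.mem_insert _ _⟩
    · rcases hadj with h1 | ⟨h1, h2⟩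
      · rcases hG1nbr p.1 h1 with h | h
        · left; left; exact ⟨h, hpS⟩
        · left; right; exact ⟨h, hpS⟩
      · right; exact ⟨h1.symm, Set.mem_insert_of_mem _ h2⟩
  -- cardinalities of the copies
  have copy_card : ∀ c : Fin (n' + 3),
      ({p : Fin (n' + 3) × Fin (m' + 3) | p.1 = c}).ncard = m' + 3 := by
    intro c
    have himg : {p : Fin (n' + 3) × Fin (m' + 3) | p.1 = c}
        = (fun x : Fin (m' + 3) => (c, x)) '' Set.univ := by
      ext p
      constructor
      · intro hp
        exact ⟨p.2, Set.mem_univ _, Prod.ext (by exact hp.symm) rfl⟩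
      · rintro ⟨x, -, rfl⟩
        exact rfl
    rw [himg, Set.ncard_image_of_injective _ (fun x y hxy => congrArg Prod.snd hxy),
      Set.ncard_univ]
    simp
  -- identify the intersections with copyCount sets
  have hsm : Cm ∩ S = S ∩ {p : Fin (n' + 3) × Fin (m' + 3) | (p.1 : ℕ) + 1 = i - 1} := by
    ext p
    simp only [hCmdef, Set.mem_inter_iff, Set.mem_setOf_eq]
    constructor
    · rintro ⟨h1, h2⟩
      refine ⟨h2, ?_⟩
      rw [h1, ham]; omega
    · rintro ⟨h1, h2⟩
      refine ⟨?_, h1⟩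
      apply Fin.ext
      rw [ham]; omega
  have hsp : Cp ∩ S = S ∩ {p : Fin (n' + 3) × Fin (m' + 3) | (p.1 : ℕ) + 1 = i + 1} := by
    ext p
    simp only [hCpdef, Set.mem_inter_iff, Set.mem_setOf_eq]
    constructor
    · rintro ⟨h1, h2⟩
      refine ⟨h2, ?_⟩
      rw [h1, hap]; omega
    · rintro ⟨h1, h2⟩
      refine ⟨?_, h1⟩
      apply Fin.ext
      rw [hap]; omega
  -- D has at most 3 elements
  have hDsub : D ⊆ (fun x : Fin (m' + 3) => (a, x)) '' {b, b - 1, b + 1} := by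
    rintro p ⟨h1, h2⟩
    rw [closedNbhd, Set.mem_insert_iff] at h2
    refine ⟨p.2, ?_, Prod.ext h1.symm rfl⟩
    rcases h2 with h2 | h2
    · simp [h2]
    · rcases hG2nbr p.2 h2 with h | h <;> simp [h]
  have hD3 : D.ncard ≤ 3 := by
    refine le_trans (Set.ncard_le_ncard hDsub (Set.toFinite _)) ?_
    refine le_trans (Set.ncard_image_le (Set.toFinite _)) ?_
    refine le_trans (Set.ncard_insert_le _ _) ?_
    have := Set.ncard_insert_le (b - 1) ({b + 1} : Set (Fin (m' + 3)))
    have h1 : ({b + 1} : Set (Fin (m' + 3))).ncard = 1 := Set.ncard_singleton _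
    omega
  -- disjointness of the two copies
  have hdisj : Disjoint (Cm \ S) (Cp \ S) := by
    rw [Set.disjoint_left]
    rintro p ⟨h1, -⟩ ⟨h2, -⟩
    have e1 : ((a - 1 : Fin (n' + 3)) : ℕ) = ((a + 1 : Fin (n' + 3)) : ℕ) := by
      rw [← h1, ← h2]
    rw [ham, hap] at e1
    omega
  -- counting
  have key : (A \ S).ncard ≤ (A ∩ S).ncard := hS.1 v hvS
  have h1 : (Cm \ S).ncard + (Cp \ S).ncard ≤ (A \ S).ncard := by
    rw [← Set.ncard_union_eq hdisj (Set.toFinite _) (Set.toFinite _)]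
    refine Set.ncard_le_ncard ?_ (Set.toFinite _)
    refine Set.union_subset (fun p hp => ⟨hCmA hp.1, hp.2⟩)
      (fun p hp => ⟨hCpA hp.1, hp.2⟩)
  have h2 : (A ∩ S).ncard ≤ (Cm ∩ S).ncard + (Cp ∩ S).ncard + D.ncard := by
    refine le_trans (Set.ncard_le_ncard hAS (Set.toFinite _)) ?_
    refine le_trans (Set.ncard_union_le _ _) ?_
    exact Nat.add_le_add_right (Set.ncard_union_le _ _) _
  have hCmcard : Cm.ncard = m' + 3 := copy_card (a - 1)
  have hCpcard : Cp.ncard = m' + 3 := copy_card (a + 1)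
  have h3 := Set.ncard_inter_add_ncard_diff_eq_ncard Cm S (Set.toFinite _)
  have h4 := Set.ncard_inter_add_ncard_diff_eq_ncard Cp S (Set.toFinite _)
  have e1 : copyCount S (i - 1) = (Cm ∩ S).ncard := by rw [copyCount, ← hsm]
  have e2 : copyCount S (i + 1) = (Cp ∩ S).ncard := by rw [copyCount, ← hsp]
  rw [e1, e2]
  omega
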